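/- arXiv:1202.6437 — 4 statements merged into one kernel-verified Lean document; each statement's English description precedes it below -/
import Mathlib

section
/- Let H be a group with a length function ℓ, A the free abelian group with basis { a_h : h ∈ H, h ≠ 1 }, V = A ≀ H the restricted wreath product, and V W̄r ℤ the unrestricted wreath product of V by the infinite cyclic group ℤ generated by t. For each non-trivial h ∈ H, define functions f_{1,h}, f_{2,h} : ℤ → V in the base of V W̄r ℤ by f_{1,h}(n) = 1 for n ≤ 0 and f_{1,h}(n) = a_h^{ℓ(h)} h for n > 0, and f_{2,h}(n) = 1 for n ≤ 0 and f_{2,h}(n) = a_h for n > 0. Let U = { f_{1,h}, f_{2,h} : h ∈ H, h ≠ 1 }, Z = U ∪ {t}, and K = ⟨Z⟩ ≤ V W̄r ℤ. Identifying each v ∈ V with the element of the base of V W̄r ℤ taking value v at 0 and 1 elsewhere (so that a_h^{ℓ(h)} h = [t, f_{1,h}] and a_h = [t, f_{2,h}] lie in K, and H ≤ V ≤ K), one has ℓ(h) ≤ |h|_Z for every h ∈ H. -/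
/-- `ℓ` is a length function on the group `H`. -/
def IsLengthFunction {H : Type*} [Group H] (ℓ : H → ℕ) : Prop :=
  (∀ h : H, ℓ h = 0 ↔ h = 1) ∧ (∀ h : H, ℓ h⁻¹ = ℓ h) ∧ ∀ g h : H, ℓ (g * h) ≤ ℓ g + ℓ h

/-- The word length of `g` with respect to a generating set `X`: the least length of a word in
`X ∪ X⁻¹` representing `g`. -/
noncomputable def wordLength {G : Type*} [Group G] (X : Set G) (g : G) : ℕ :=
  sInf {n | ∃ l : List G, l.length = n ∧ (∀ x ∈ l, x ∈ X ∨ x⁻¹ ∈ X) ∧ l.prod = g}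

/-- The additive automorphism of the base `H →₀ A` of a wreath product given by right
translation of the domain: `(b ∘ f)(x) = f (x * b)`. -/
noncomputable def wreathShift {H : Type*} [Group H] {A : Type*} [AddCommGroup A] (b : H) :
    (H →₀ A) ≃+ (H →₀ A) := Finsupp.domCongr (Equiv.mulRight b).symm

@[simp] theorem wreathShift_apply {H : Type*} [Group H] {A : Type*} [AddCommGroup A]
    (b : H) (f : H →₀ A) (x : H) : wreathShift b f x = f (x * b) := by
  simp [wreathShift, Finsupp.domCongr_apply]

/-- The action of `H` on the (multiplicative) base of the wreath product `A ≀ H`. -/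
noncomputable def wreathAction (H : Type*) [Group H] (A : Type*) [AddCommGroup A] :
    H →* MulAut (Multiplicative (H →₀ A)) where
  toFun b := AddEquiv.toMultiplicative (wreathShift b)
  map_one' := by
    refine MulEquiv.ext fun f => ?_
    refine Finsupp.ext fun x => ?_
    show Finsupp.equivMapDomain (Equiv.mulRight (1 : H)).symm (Multiplicative.toAdd f) x
        = (Multiplicative.toAdd f) x
    simp [Finsupp.equivMapDomain_apply]
  map_mul' := by
    intro a b
    refine MulEquiv.ext fun f => ?_
    refine Finsupp.ext fun x => ?_
    show Finsupp.equivMapDomain (Equiv.mulRight (a * b)).symm (Multiplicative.toAdd f) x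
        = Finsupp.equivMapDomain (Equiv.mulRight a).symm
            (Finsupp.equivMapDomain (Equiv.mulRight b).symm (Multiplicative.toAdd f)) x
    simp [Finsupp.equivMapDomain_apply, mul_assoc]

/-- The wreath product `A ≀ H` of an additive abelian group `A` (the lamp group, written
multiplicatively) by a group `H`, realized as a semidirect product of the base
`H →₀ A` by `H`. -/
noncomputable def WreathProd (A : Type*) [AddCommGroup A] (H : Type*) [Group H] :=
  (Multiplicative (H →₀ A)) ⋊[wreathAction H A] H

noncomputable instance (A : Type*) [AddCommGroup A] (H : Type*) [Group H] :
    Group (WreathProd A H) :=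
  inferInstanceAs (Group ((Multiplicative (H →₀ A)) ⋊[wreathAction H A] H))

/-- The embedding of the base into the wreath product. -/
noncomputable def wreathBase {A : Type*} [AddCommGroup A] {H : Type*} [Group H]
    (w : H →₀ A) : WreathProd A H :=
  SemidirectProduct.inl (Multiplicative.ofAdd w)

/-- The embedding of `H` into the wreath product. -/
noncomputable def wreathRight {A : Type*} [AddCommGroup A] {H : Type*} [Group H]
    (h : H) : WreathProd A H :=
  SemidirectProduct.inr h

/-- The wreath product `V = A ≀ H` where `A` is the free abelian group with basis
`{a_h : h ∈ H \ {1}}`. -/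
noncomputable abbrev WreathV (H : Type*) [Group H] : Type _ :=
  WreathProd ({h : H // h ≠ 1} →₀ ℤ) H

/-- The basis element `a_h` of the base of `V`, raised to the power `m`. -/
noncomputable def aPow {H : Type*} [Group H] (h : H) (hh : h ≠ 1) (m : ℤ) : WreathV H :=
  wreathBase (Finsupp.single (1 : H) (Finsupp.single (⟨h, hh⟩ : {h : H // h ≠ 1}) m))

/-- The shift automorphism `f ↦ f(· + b)` of the base of the unrestricted wreath product
`V W̄r ℤ`, corresponding to `(b ∘ f)(x) = f(x + b)`. -/
def shiftAut (V : Type*) [Group V] (b : ℤ) : MulAut (ℤ → V) where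
  toFun f := fun x => f (x + b)
  invFun f := fun x => f (x - b)
  left_inv f := by funext x; simp
  right_inv f := by funext x; simp
  map_mul' f g := rfl

/-- The action of `ℤ` on the base of the unrestricted wreath product `V W̄r ℤ`. -/
def shiftHom (V : Type*) [Group V] : Multiplicative ℤ →* MulAut (ℤ → V) where
  toFun b := shiftAut V (Multiplicative.toAdd b)
  map_one' := by
    refine MulEquiv.ext fun f => ?_
    funext x
    simp [shiftAut]
  map_mul' a b := by
    refine MulEquiv.ext fun f => ?_
    funext x
    simp [shiftAut, add_assoc]

/-- The unrestricted wreath product `V W̄r ℤ`, with base all functions `ℤ → V`. -/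
abbrev UnrestrictedWreathZ (V : Type*) [Group V] : Type _ :=
  (ℤ → V) ⋊[shiftHom V] Multiplicative ℤ

/-- The element `a_h^{ℓ(h)} h ∈ V`. -/
noncomputable def vA {H : Type*} [Group H] (ℓ : H → ℕ) (h : H) (hh : h ≠ 1) : WreathV H :=
  aPow h hh (ℓ h : ℤ) * wreathRight h

/-- The element `a_h ∈ V`. -/
noncomputable def vB {H : Type*} [Group H] (h : H) (hh : h ≠ 1) : WreathV H :=
  aPow h hh 1

/-- The function `f_{1,h} : ℤ → V`, equal to `1` on `n ≤ 0` and to `a_h^{ℓ(h)} h` on `n > 0`. -/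
noncomputable def fOne {H : Type*} [Group H] (ℓ : H → ℕ) (h : H) (hh : h ≠ 1) :
    ℤ → WreathV H :=
  fun n => if n ≤ 0 then 1 else vA ℓ h hh

/-- The function `f_{2,h} : ℤ → V`, equal to `1` on `n ≤ 0` and to `a_h` on `n > 0`. -/
noncomputable def fTwo {H : Type*} [Group H] (h : H) (hh : h ≠ 1) : ℤ → WreathV H :=
  fun n => if n ≤ 0 then 1 else vB h hh

/-- The generator `t` of the acting copy of `ℤ`. -/
def tGen {V : Type*} [Group V] : UnrestrictedWreathZ V :=
  SemidirectProduct.inr (Multiplicative.ofAdd (1 : ℤ))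

/-- The generating set `Z = U₁ ∪ U₂ ∪ {t}` of `K ≤ V W̄r ℤ`. -/
noncomputable def genSetZ {H : Type*} [Group H] (ℓ : H → ℕ) :
    Set (UnrestrictedWreathZ (WreathV H)) :=
  {z | ∃ (h : H) (hh : h ≠ 1), z = SemidirectProduct.inl (fOne ℓ h hh)} ∪
    {z | ∃ (h : H) (hh : h ≠ 1), z = SemidirectProduct.inl (fTwo h hh)} ∪
    {tGen}

/-- The identification of `v ∈ V` with the element of the base of `V W̄r ℤ` taking the value `v`
at `0` and `1` elsewhere. -/
noncomputable def embedV {H : Type*} [Group H] (v : WreathV H) :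
    UnrestrictedWreathZ (WreathV H) :=
  SemidirectProduct.inl (fun n => if n = 0 then v else 1)

open scoped commutatorElement

section Aux

open SemidirectProduct Multiplicative

variable {H : Type} [Group H]

/-- Abbreviation for the lamp group of `V`. -/
abbrev SubA (H : Type) [Group H] : Type := ({g : H // g ≠ 1} →₀ ℤ)

/-- View an element of `WreathV H` as an element of the underlying semidirect product. -/
def sdV (x : WreathV H) :
    (Multiplicative (H →₀ SubA H)) ⋊[wreathAction H (SubA H)] H := x

@[simp] lemma sdV_mul (x y : WreathV H) : sdV (x * y) = sdV x * sdV y := rfl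

@[simp] lemma sdV_one : sdV (1 : WreathV H) = 1 := rfl

lemma wreathAction_apply (b : H) (m : Multiplicative (H →₀ SubA H)) :
    (wreathAction H (SubA H) b) m = Multiplicative.ofAdd (wreathShift b (Multiplicative.toAdd m)) := rfl

lemma sdV_vA (ℓ : H → ℕ) (g : H) (hg : g ≠ 1) :
    sdV (vA ℓ g hg) = inl (ofAdd (Finsupp.single (1:H)
      (Finsupp.single (⟨g, hg⟩ : {g : H // g ≠ 1}) (ℓ g : ℤ)))) * inr g := rfl

lemma sdV_vB (g : H) (hg : g ≠ 1) :
    sdV (vB g hg) = inl (ofAdd (Finsupp.single (1:H)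
      (Finsupp.single (⟨g, hg⟩ : {g : H // g ≠ 1}) (1 : ℤ)))) := rfl

end Aux
section Phi

open SemidirectProduct Multiplicative Finsupp

variable {H : Type} [Group H]

/-- The auxiliary Lipschitz function `u(p) = -ℓ(p h)`. -/
noncomputable def uF (ℓ : H → ℕ) (h : H) (p : H) : ℚ := -(ℓ (p * h) : ℚ)

/-- The stored value per unit charge of colour `g` at position `p`. -/
noncomputable def cF (ℓ : H → ℕ) (h : H) (p : H) (g : {g : H // g ≠ 1}) : ℚ :=
  (uF ℓ h p - uF ℓ h ((g : H)⁻¹ * p)) / (ℓ (g : H) : ℚ)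

/-- Total stored value of a lamp configuration. -/
noncomputable def lampPhi (ℓ : H → ℕ) (h : H) (w : H →₀ SubA H) : ℚ :=
  w.sum fun p a => a.sum fun g k => (k : ℚ) * cF ℓ h p g

lemma lampPhi_zero (ℓ : H → ℕ) (h : H) : lampPhi ℓ h 0 = 0 :=
  Finsupp.sum_zero_index

lemma lampPhi_add (ℓ : H → ℕ) (h : H) (w w' : H →₀ SubA H) :
    lampPhi ℓ h (w + w') = lampPhi ℓ h w + lampPhi ℓ h w' := by
  unfold lampPhi
  refine Finsupp.sum_add_index' (fun p => Finsupp.sum_zero_index) (fun p a a' => ?_)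
  refine Finsupp.sum_add_index' (fun g => by simp) (fun g k k' => by push_cast; ring)

lemma lampPhi_single (ℓ : H → ℕ) (h : H) (p : H) (g : {g : H // g ≠ 1}) (k : ℤ) :
    lampPhi ℓ h (Finsupp.single p (Finsupp.single g k)) = (k : ℚ) * cF ℓ h p g := by
  unfold lampPhi
  rw [Finsupp.sum_single_index (by exact Finsupp.sum_zero_index),
    Finsupp.sum_single_index (by simp)]

lemma wreathShift_single (b q : H) (a : SubA H) :
    wreathShift b (Finsupp.single q a) = Finsupp.single (q * b⁻¹) a := by
  classical
  ext x y
  rw [wreathShift_apply, Finsupp.single_apply, Finsupp.single_apply]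
  refine congrFun (congrArg _ (if_congr ?_ rfl rfl)) y
  constructor
  · intro hx; rw [hx]; simp [mul_assoc]
  · intro hx; rw [← hx]; simp [mul_assoc]

/-- The potential function on `V`. -/
noncomputable def Phi (ℓ : H → ℕ) (h : H) (x : WreathV H) : ℚ :=
  uF ℓ h ((sdV x).right)⁻¹ + lampPhi ℓ h (Multiplicative.toAdd (sdV x).left)

lemma Phi_mul_gen (ℓ : H → ℕ) (h : H) (x : WreathV H) (q : H) (g : {g : H // g ≠ 1})
    (k : ℤ) (r : H)
    (hs : sdV s = inl (ofAdd (Finsupp.single q (Finsupp.single g k))) * inr r) :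
    Phi ℓ h (x * s) = uF ℓ h ((sdV x).right * r)⁻¹
      + lampPhi ℓ h (Multiplicative.toAdd (sdV x).left)
      + (k : ℚ) * cF ℓ h (q * ((sdV x).right)⁻¹) g := by
  unfold Phi
  rw [sdV_mul, hs]
  simp only [mul_left, mul_right, left_inl, right_inl, map_one, one_mul, mul_one,
    MulAut.one_apply, right_inr, left_inr, toAdd_one, add_zero, wreathAction_apply, toAdd_mul, toAdd_ofAdd, wreathShift_single,
    lampPhi_add, lampPhi_single]
  ring

end Phi
section Step

open SemidirectProduct Multiplicative

variable {H : Type} [Group H]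

lemma wreathAction_inv_apply (b : H) (m : Multiplicative (H →₀ SubA H)) :
    ((wreathAction H (SubA H) b)⁻¹) m
      = Multiplicative.ofAdd (wreathShift b⁻¹ (Multiplicative.toAdd m)) := by
  rw [← map_inv (wreathAction H (SubA H))]; rfl

lemma gen_inv (q : H) (g : {g : H // g ≠ 1}) (k : ℤ) (r : H) :
    ((inl (ofAdd (Finsupp.single q (Finsupp.single g k))) * inr r :
        (Multiplicative (H →₀ SubA H)) ⋊[wreathAction H (SubA H)] H))⁻¹
      = inl (ofAdd (Finsupp.single (q * r) (Finsupp.single g (-k)))) * inr r⁻¹ := by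
  ext
  · simp [mul_left, mul_right, inv_left, inv_right, left_inl, right_inl, left_inr, right_inr,
      wreathAction_inv_apply, wreathAction_apply, wreathShift_single, Finsupp.single_neg,
      (show ∀ (b : H) (m : Multiplicative (H →₀ SubA H)), ((wreathAction H (SubA H) b).symm) m
        = Multiplicative.ofAdd (wreathShift b⁻¹ (Multiplicative.toAdd m)) from
        wreathAction_inv_apply)]
  · simp [mul_right, inv_right, right_inl, right_inr]

lemma sdV_vA_inv (ℓ : H → ℕ) (g : H) (hg : g ≠ 1) :
    sdV ((vA ℓ g hg)⁻¹) = inl (ofAdd (Finsupp.single (1 * g)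
      (Finsupp.single (⟨g, hg⟩ : {g : H // g ≠ 1}) (-(ℓ g : ℤ))))) * inr g⁻¹ := by
  have h1 : sdV ((vA ℓ g hg)⁻¹) = (sdV (vA ℓ g hg))⁻¹ := rfl
  rw [h1, sdV_vA, gen_inv]

lemma sdV_vB' (g : H) (hg : g ≠ 1) :
    sdV (vB g hg) = inl (ofAdd (Finsupp.single (1:H)
      (Finsupp.single (⟨g, hg⟩ : {g : H // g ≠ 1}) (1 : ℤ)))) * inr 1 := by
  rw [sdV_vB]
  simp

lemma sdV_vB_inv (g : H) (hg : g ≠ 1) :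
    sdV ((vB g hg)⁻¹) = inl (ofAdd (Finsupp.single (1 * (1:H))
      (Finsupp.single (⟨g, hg⟩ : {g : H // g ≠ 1}) (-1 : ℤ)))) * inr (1:H)⁻¹ := by
  have h1 : sdV ((vB g hg)⁻¹) = (sdV (vB g hg))⁻¹ := rfl
  rw [h1, sdV_vB', gen_inv]

lemma abs_cF_le (ℓ : H → ℕ) (h : H) (hℓ : IsLengthFunction ℓ) (p : H) (g : {g : H // g ≠ 1}) :
    |cF ℓ h p g| ≤ 1 := by
  have hg1 : (g : H) ≠ 1 := g.2
  have hpos : 0 < ℓ (g : H) := Nat.pos_of_ne_zero (fun e => hg1 ((hℓ.1 _).mp e))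
  have h1 : ℓ ((g : H)⁻¹ * p * h) ≤ ℓ (g : H) + ℓ (p * h) := by
    have h2 := hℓ.2.2 (g : H)⁻¹ (p * h)
    rw [hℓ.2.1] at h2
    calc ℓ ((g : H)⁻¹ * p * h) = ℓ ((g : H)⁻¹ * (p * h)) := by rw [mul_assoc]
      _ ≤ _ := h2
  have h2 : ℓ (p * h) ≤ ℓ (g : H) + ℓ ((g : H)⁻¹ * p * h) := by
    have h3 := hℓ.2.2 (g : H) ((g : H)⁻¹ * (p * h))
    rw [mul_inv_cancel_left, ← mul_assoc] at h3
    exact h3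
  have h1' : (ℓ ((g : H)⁻¹ * p * h) : ℚ) ≤ (ℓ (g : H) : ℚ) + (ℓ (p * h) : ℚ) := by
    exact_mod_cast h1
  have h2' : (ℓ (p * h) : ℚ) ≤ (ℓ (g : H) : ℚ) + (ℓ ((g : H)⁻¹ * p * h) : ℚ) := by
    exact_mod_cast h2
  have hgpos : (0 : ℚ) < (ℓ (g : H) : ℚ) := by exact_mod_cast hpos
  rw [cF, uF, uF, abs_div, abs_of_pos hgpos, div_le_one hgpos, abs_le]
  constructor <;> linarith

lemma Phi_mul_vA (ℓ : H → ℕ) (h : H) (hℓ : IsLengthFunction ℓ) (x : WreathV H)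
    (g : H) (hg : g ≠ 1) : Phi ℓ h (x * vA ℓ g hg) = Phi ℓ h x := by
  have hne : (ℓ g : ℚ) ≠ 0 := by
    have : ℓ g ≠ 0 := fun e => hg ((hℓ.1 _).mp e)
    exact_mod_cast this
  rw [Phi_mul_gen ℓ h x _ _ _ _ (sdV_vA ℓ g hg), Phi]
  simp only [cF, one_mul, mul_inv_rev]
  field_simp
  push_cast; ring

lemma Phi_mul_vA_inv (ℓ : H → ℕ) (h : H) (hℓ : IsLengthFunction ℓ) (x : WreathV H)
    (g : H) (hg : g ≠ 1) : Phi ℓ h (x * (vA ℓ g hg)⁻¹) = Phi ℓ h x := by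
  have hne : (ℓ g : ℚ) ≠ 0 := by
    have : ℓ g ≠ 0 := fun e => hg ((hℓ.1 _).mp e)
    exact_mod_cast this
  rw [Phi_mul_gen ℓ h x _ _ _ _ (sdV_vA_inv ℓ g hg), Phi]
  simp only [cF, one_mul, mul_inv_rev, inv_inv, inv_mul_cancel_left]
  field_simp
  push_cast; ring

lemma Phi_mul_vB (ℓ : H → ℕ) (h : H) (hℓ : IsLengthFunction ℓ) (x : WreathV H)
    (g : H) (hg : g ≠ 1) : Phi ℓ h (x * vB g hg) ≤ Phi ℓ h x + 1 := by
  rw [Phi_mul_gen ℓ h x _ _ _ _ (sdV_vB' g hg), Phi]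
  have hc := abs_cF_le ℓ h hℓ (((sdV x).right)⁻¹) (⟨g, hg⟩ : {g : H // g ≠ 1})
  rw [abs_le] at hc
  simp only [mul_one, Int.cast_one, one_mul]
  linarith [hc.2]

lemma Phi_mul_vB_inv (ℓ : H → ℕ) (h : H) (hℓ : IsLengthFunction ℓ) (x : WreathV H)
    (g : H) (hg : g ≠ 1) : Phi ℓ h (x * (vB g hg)⁻¹) ≤ Phi ℓ h x + 1 := by
  rw [Phi_mul_gen ℓ h x _ _ _ _ (sdV_vB_inv g hg), Phi]
  have hc := abs_cF_le ℓ h hℓ (((sdV x).right)⁻¹) (⟨g, hg⟩ : {g : H // g ≠ 1})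
  rw [abs_le] at hc
  simp only [mul_one, one_mul, Int.cast_neg, Int.cast_one, inv_one]
  linarith [hc.1]

lemma Phi_step (ℓ : H → ℕ) (h : H) (hℓ : IsLengthFunction ℓ) (x v : WreathV H)
    (hv : v = 1 ∨ ∃ (g : H) (hg : g ≠ 1),
      v = vA ℓ g hg ∨ v = (vA ℓ g hg)⁻¹ ∨ v = vB g hg ∨ v = (vB g hg)⁻¹) :
    Phi ℓ h (x * v) ≤ Phi ℓ h x + 1 := by
  rcases hv with rfl | ⟨g, hg, rfl | rfl | rfl | rfl⟩
  · rw [mul_one]; linarith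
  · rw [Phi_mul_vA ℓ h hℓ x g hg]; linarith
  · rw [Phi_mul_vA_inv ℓ h hℓ x g hg]; linarith
  · exact Phi_mul_vB ℓ h hℓ x g hg
  · exact Phi_mul_vB_inv ℓ h hℓ x g hg

end Step
section BigGroup

open SemidirectProduct Multiplicative

variable {H : Type} [Group H]

/-- The potential on the unrestricted wreath product: the potential of the value at `0`. -/
noncomputable def PhiHat (ℓ : H → ℕ) (h : H) (y : UnrestrictedWreathZ (WreathV H)) : ℚ :=
  Phi ℓ h (y.left 0)

lemma left0_mul (y z : UnrestrictedWreathZ (WreathV H)) :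
    (y * z).left 0 = y.left 0 * z.left (0 + Multiplicative.toAdd y.right) := rfl

lemma gen_left_form (ℓ : H → ℕ) (z : UnrestrictedWreathZ (WreathV H))
    (hz : z ∈ genSetZ ℓ ∨ z⁻¹ ∈ genSetZ ℓ) (m : ℤ) :
    z.left m = 1 ∨ ∃ (g : H) (hg : g ≠ 1),
      z.left m = vA ℓ g hg ∨ z.left m = (vA ℓ g hg)⁻¹ ∨
      z.left m = vB g hg ∨ z.left m = (vB g hg)⁻¹ := by
  simp only [genSetZ, Set.mem_union, Set.mem_setOf_eq, Set.mem_singleton_iff] at hz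
  rcases hz with ((⟨g, hg, rfl⟩ | ⟨g, hg, rfl⟩) | rfl) | ((⟨g, hg, hz⟩ | ⟨g, hg, hz⟩) | hz)
  · rw [left_inl, fOne]
    by_cases hm : m ≤ 0
    · rw [if_pos hm]; exact Or.inl rfl
    · rw [if_neg hm]; exact Or.inr ⟨g, hg, Or.inl rfl⟩
  · rw [left_inl, fTwo]
    by_cases hm : m ≤ 0
    · rw [if_pos hm]; exact Or.inl rfl
    · rw [if_neg hm]; exact Or.inr ⟨g, hg, Or.inr (Or.inr (Or.inl rfl))⟩
  · rw [tGen, left_inr]; exact Or.inl rfl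
  · have hz' : z = (SemidirectProduct.inl (fOne ℓ g hg))⁻¹ := by
      rw [← hz, inv_inv]
    rw [hz', ← map_inv, left_inl, Pi.inv_apply, fOne]
    by_cases hm : m ≤ 0
    · rw [if_pos hm, inv_one]; exact Or.inl rfl
    · rw [if_neg hm]; exact Or.inr ⟨g, hg, Or.inr (Or.inl rfl)⟩
  · have hz' : z = (SemidirectProduct.inl (fTwo g hg))⁻¹ := by
      rw [← hz, inv_inv]
    rw [hz', ← map_inv, left_inl, Pi.inv_apply, fTwo]
    by_cases hm : m ≤ 0
    · rw [if_pos hm, inv_one]; exact Or.inl rfl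
    · rw [if_neg hm]; exact Or.inr ⟨g, hg, Or.inr (Or.inr (Or.inr rfl))⟩
  · have hz' : z = tGen⁻¹ := by rw [← hz, inv_inv]
    rw [hz', tGen, ← map_inv, left_inr]; exact Or.inl rfl

lemma PhiHat_step (ℓ : H → ℕ) (h : H) (hℓ : IsLengthFunction ℓ)
    (y z : UnrestrictedWreathZ (WreathV H))
    (hz : z ∈ genSetZ ℓ ∨ z⁻¹ ∈ genSetZ ℓ) :
    PhiHat ℓ h (y * z) ≤ PhiHat ℓ h y + 1 := by
  rw [PhiHat, PhiHat, left0_mul]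
  have hform := gen_left_form ℓ z hz (0 + Multiplicative.toAdd y.right)
  rcases hform with h1 | ⟨g, hg, hf⟩
  · rw [h1, mul_one]; linarith
  · refine Phi_step ℓ h hℓ _ _ ?_
    rcases hf with hf | hf | hf | hf <;> rw [hf]
    · exact Or.inr ⟨g, hg, Or.inl rfl⟩
    · exact Or.inr ⟨g, hg, Or.inr (Or.inl rfl)⟩
    · exact Or.inr ⟨g, hg, Or.inr (Or.inr (Or.inl rfl))⟩
    · exact Or.inr ⟨g, hg, Or.inr (Or.inr (Or.inr rfl))⟩

lemma PhiHat_word (ℓ : H → ℕ) (h : H) (hℓ : IsLengthFunction ℓ) :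
    ∀ (l : List (UnrestrictedWreathZ (WreathV H))),
      (∀ z ∈ l, z ∈ genSetZ ℓ ∨ z⁻¹ ∈ genSetZ ℓ) →
      ∀ y, PhiHat ℓ h (y * l.prod) ≤ PhiHat ℓ h y + l.length := by
  intro l
  induction l with
  | nil => intro _ y; simp
  | cons z l ih =>
    intro hmem y
    rw [List.prod_cons, ← mul_assoc]
    have h1 := ih (fun x hx => hmem x (List.mem_cons_of_mem z hx)) (y * z)
    have h2 := PhiHat_step ℓ h hℓ y z (hmem z (List.mem_cons_self))
    rw [List.length_cons]
    push_cast
    push_cast at h1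
    linarith

lemma PhiHat_one (ℓ : H → ℕ) (h : H) : PhiHat ℓ h 1 = -(ℓ h : ℚ) := by
  rw [PhiHat]
  have h1 : ((1 : UnrestrictedWreathZ (WreathV H)).left) 0 = 1 := rfl
  rw [h1, Phi]
  have h2 : (sdV (1 : WreathV H)).right = 1 := rfl
  have h3 : Multiplicative.toAdd (sdV (1 : WreathV H)).left = 0 := rfl
  rw [h2, h3, lampPhi_zero, inv_one, uF, one_mul, add_zero]

lemma PhiHat_embed (ℓ : H → ℕ) (h : H) (hℓ : IsLengthFunction ℓ) :
    PhiHat ℓ h (embedV (wreathRight h : WreathV H)) = 0 := by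
  rw [PhiHat, embedV, left_inl]
  have h1 : (if (0:ℤ) = 0 then (wreathRight h : WreathV H) else 1) = wreathRight h := by
    rw [if_pos rfl]
  rw [h1, Phi]
  have h2 : (sdV (wreathRight h : WreathV H)).right = h := rfl
  have h3 : Multiplicative.toAdd (sdV (wreathRight h : WreathV H)).left = 0 := rfl
  rw [h2, h3, lampPhi_zero, uF, inv_mul_cancel, add_zero]
  rw [(hℓ.1 1).mpr rfl]
  norm_num

end BigGroup
section Algebra

open SemidirectProduct Multiplicative

variable {H : Type} [Group H]

lemma comm_tGen_inl {V' : Type} [Group V'] (f : ℤ → V') :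
    ⁅(tGen : UnrestrictedWreathZ V'),
        (SemidirectProduct.inl f : UnrestrictedWreathZ V')⁆
      = (SemidirectProduct.inl ((fun n => f (n + 1)) * f⁻¹) : UnrestrictedWreathZ V') := by
  rw [commutatorElement_def, tGen, ← map_inv (inr (φ := shiftHom V')), ← inl_aut,
    ← map_inv (inl (φ := shiftHom V')), ← map_mul]
  congr 1

lemma comm_step {V' : Type} [Group V'] (v : V') :
    ⁅(tGen : UnrestrictedWreathZ V'),
        (SemidirectProduct.inl (fun n => if n ≤ 0 then 1 else v) : UnrestrictedWreathZ V')⁆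
      = (SemidirectProduct.inl (fun n => if n = 0 then v else 1) : UnrestrictedWreathZ V') := by
  rw [comm_tGen_inl]
  congr 1
  funext n
  rw [Pi.mul_apply, Pi.inv_apply]
  by_cases h0 : n = 0
  · subst h0; norm_num
  · rw [if_neg h0]
    by_cases hn : n ≤ 0
    · have h1 : n + 1 ≤ 0 := by omega
      rw [if_pos hn, if_pos h1, inv_one, mul_one]
    · have h1 : ¬ (n + 1 ≤ 0) := by omega
      rw [if_neg hn, if_neg h1, mul_inv_cancel]

lemma comm_fOne (ℓ : H → ℕ) (h : H) (hh : h ≠ 1) :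
    ⁅(tGen : UnrestrictedWreathZ (WreathV H)), SemidirectProduct.inl (fOne ℓ h hh)⁆
      = embedV (vA ℓ h hh) :=
  comm_step (vA ℓ h hh)

lemma comm_fTwo (ℓ : H → ℕ) (h : H) (hh : h ≠ 1) :
    ⁅(tGen : UnrestrictedWreathZ (WreathV H)), SemidirectProduct.inl (fTwo h hh)⁆
      = embedV (vB h hh) :=
  comm_step (vB h hh)

lemma aPow_add (g : H) (hg : g ≠ 1) (m m' : ℤ) :
    aPow g hg m * aPow g hg m' = aPow g hg (m + m') := by
  unfold aPow wreathBase
  show (inl (ofAdd (Finsupp.single (1:H) (Finsupp.single (⟨g, hg⟩ : {g : H // g ≠ 1}) m))) :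
      (Multiplicative (H →₀ SubA H)) ⋊[wreathAction H (SubA H)] H)
      * inl (ofAdd (Finsupp.single (1:H) (Finsupp.single (⟨g, hg⟩ : {g : H // g ≠ 1}) m')))
    = inl (ofAdd (Finsupp.single (1:H) (Finsupp.single (⟨g, hg⟩ : {g : H // g ≠ 1}) (m + m'))))
  exact (map_mul (inl (φ := wreathAction H (SubA H))) _ _).symm.trans
    (by rw [← ofAdd_add, ← Finsupp.single_add, ← Finsupp.single_add])

lemma aPow_zero (g : H) (hg : g ≠ 1) : aPow g hg 0 = 1 := by
  unfold aPow wreathBase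
  show (inl (ofAdd (Finsupp.single (1:H) (Finsupp.single (⟨g, hg⟩ : {g : H // g ≠ 1}) (0:ℤ)))) :
      (Multiplicative (H →₀ SubA H)) ⋊[wreathAction H (SubA H)] H) = 1
  rw [Finsupp.single_zero, Finsupp.single_zero, ofAdd_zero, map_one]

lemma vB_inv (g : H) (hg : g ≠ 1) : (vB g hg)⁻¹ = aPow g hg (-1) := by
  symm
  refine eq_inv_of_mul_eq_one_left ?_
  show aPow g hg (-1) * aPow g hg 1 = 1
  rw [aPow_add, neg_add_cancel]
  exact aPow_zero g hg

lemma vB_inv_pow (g : H) (hg : g ≠ 1) (k : ℕ) :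
    ((vB g hg)⁻¹) ^ k = aPow g hg (-(k : ℤ)) := by
  induction k with
  | zero => simpa using (aPow_zero g hg).symm
  | succ n ih =>
    rw [pow_succ, ih, vB_inv, aPow_add]
    congr 1
    push_cast
    ring

lemma key_V (ℓ : H → ℕ) (h : H) (hh : h ≠ 1) :
    ((vB h hh)⁻¹) ^ (ℓ h) * vA ℓ h hh = wreathRight h := by
  rw [vB_inv_pow, vA, ← mul_assoc, aPow_add, neg_add_cancel, aPow_zero, one_mul]

lemma embedV_mul (v w : WreathV H) : embedV (v * w) = embedV v * embedV w := by
  unfold embedV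
  rw [← map_mul]
  congr 1
  funext n
  rw [Pi.mul_apply]
  by_cases h0 : n = 0
  · rw [if_pos h0, if_pos h0, if_pos h0]
  · rw [if_neg h0, if_neg h0, if_neg h0, mul_one]

lemma embedV_one : embedV (1 : WreathV H) = 1 := by
  unfold embedV
  have h1 : (fun n : ℤ => if n = 0 then (1 : WreathV H) else 1) = 1 := by
    funext n; split_ifs <;> rfl
  rw [h1, map_one]

lemma embedV_inv (v : WreathV H) : embedV v⁻¹ = (embedV v)⁻¹ := by
  refine eq_inv_of_mul_eq_one_left ?_
  rw [← embedV_mul, inv_mul_cancel, embedV_one]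

lemma embedV_pow (v : WreathV H) (k : ℕ) : embedV (v ^ k) = (embedV v) ^ k := by
  induction k with
  | zero => simpa using (embedV_one (H := H))
  | succ n ih => rw [pow_succ, pow_succ, embedV_mul, ih]

lemma tGen_mem (ℓ : H → ℕ) : (tGen : UnrestrictedWreathZ (WreathV H)) ∈ genSetZ ℓ :=
  Set.mem_union_right _ rfl

lemma fOne_mem (ℓ : H → ℕ) (h : H) (hh : h ≠ 1) :
    (SemidirectProduct.inl (fOne ℓ h hh) : UnrestrictedWreathZ (WreathV H)) ∈ genSetZ ℓ :=
  Set.mem_union_left _ (Set.mem_union_left _ ⟨h, hh, rfl⟩)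

lemma fTwo_mem (ℓ : H → ℕ) (h : H) (hh : h ≠ 1) :
    (SemidirectProduct.inl (fTwo h hh) : UnrestrictedWreathZ (WreathV H)) ∈ genSetZ ℓ :=
  Set.mem_union_left _ (Set.mem_union_right _ ⟨h, hh, rfl⟩)

lemma embed_wreathRight_eq (ℓ : H → ℕ) (h : H) (hh : h ≠ 1) :
    embedV (wreathRight h : WreathV H)
      = ((embedV (vB h hh))⁻¹) ^ (ℓ h) * embedV (vA ℓ h hh) := by
  rw [← key_V ℓ h hh, embedV_mul, embedV_pow, embedV_inv]

end Algebra
/-- Under the identifications `a_h^{ℓ(h)}h = [t, f_{1,h}]`, `a_h = [t, f_{2,h}]` (so that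
`H ≤ V ≤ K = ⟨Z⟩`), one has `ℓ(h) ≤ |h|_Z` for every `h ∈ H`. -/
theorem length_le_wordLength_Z {H : Type} [Group H] (ℓ : H → ℕ)
    (hℓ : IsLengthFunction ℓ) :
    (∀ (h : H) (hh : h ≠ 1),
      ⁅(tGen : UnrestrictedWreathZ (WreathV H)), SemidirectProduct.inl (fOne ℓ h hh)⁆ =
          embedV (vA ℓ h hh) ∧
      ⁅(tGen : UnrestrictedWreathZ (WreathV H)), SemidirectProduct.inl (fTwo h hh)⁆ =
          embedV (vB h hh)) ∧
    (∀ h : H, embedV (wreathRight h : WreathV H) ∈ Subgroup.closure (genSetZ ℓ)) ∧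
    ∀ h : H, ℓ h ≤ wordLength (genSetZ ℓ) (embedV (wreathRight h : WreathV H)) := by
  have memA : ∀ (h : H) (hh : h ≠ 1),
      embedV (vA ℓ h hh) ∈ Subgroup.closure (genSetZ ℓ) := by
    intro h hh
    rw [← comm_fOne ℓ h hh, commutatorElement_def]
    have ha := Subgroup.subset_closure (tGen_mem ℓ)
    have hb := Subgroup.subset_closure (fOne_mem ℓ h hh)
    exact mul_mem (mul_mem (mul_mem ha hb) (inv_mem ha)) (inv_mem hb)
  have memB : ∀ (h : H) (hh : h ≠ 1),
      embedV (vB h hh) ∈ Subgroup.closure (genSetZ ℓ) := by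
    intro h hh
    rw [← comm_fTwo ℓ h hh, commutatorElement_def]
    have ha := Subgroup.subset_closure (tGen_mem ℓ)
    have hb := Subgroup.subset_closure (fTwo_mem ℓ h hh)
    exact mul_mem (mul_mem (mul_mem ha hb) (inv_mem ha)) (inv_mem hb)
  refine ⟨fun h hh => ⟨comm_fOne ℓ h hh, comm_fTwo ℓ h hh⟩, ?_, ?_⟩
  · intro h
    by_cases hh : h = 1
    · subst hh
      have h1 : (wreathRight (1 : H) : WreathV H) = 1 := by
        rw [wreathRight, map_one]; rfl
      rw [h1, embedV_one]
      exact one_mem _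
    · rw [embed_wreathRight_eq ℓ h hh]
      exact mul_mem (pow_mem (inv_mem (memB h hh)) _) (memA h hh)
  · intro h
    by_cases hh : h = 1
    · rw [(hℓ.1 h).mpr hh]
      exact Nat.zero_le _
    · set F1 : UnrestrictedWreathZ (WreathV H) := SemidirectProduct.inl (fOne ℓ h hh) with hF1
      set F2 : UnrestrictedWreathZ (WreathV H) := SemidirectProduct.inl (fTwo h hh) with hF2
      set l₀ : List (UnrestrictedWreathZ (WreathV H)) :=
        (List.replicate (ℓ h) [F2, tGen, F2⁻¹, tGen⁻¹]).flatten
          ++ [tGen, F1, tGen⁻¹, F1⁻¹] with hl₀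
      have hmem₀ : ∀ x ∈ l₀, x ∈ genSetZ ℓ ∨ x⁻¹ ∈ genSetZ ℓ := by
        intro x hx
        rw [hl₀, List.mem_append] at hx
        have hxcases : x = F2 ∨ x = tGen ∨ x = F2⁻¹ ∨ x = tGen⁻¹ ∨
            x = F1 ∨ x = F1⁻¹ := by
          rcases hx with hx | hx
          · rw [List.mem_flatten] at hx
            obtain ⟨l', hl', hxl'⟩ := hx
            rw [List.mem_replicate] at hl'
            rw [hl'.2] at hxl'
            simp only [List.mem_cons, List.not_mem_nil, or_false] at hxl'
            tauto
          · simp only [List.mem_cons, List.not_mem_nil, or_false] at hx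
            tauto
        have ht := tGen_mem (H := H) ℓ
        have h1 := fOne_mem ℓ h hh
        have h2 := fTwo_mem ℓ h hh
        rcases hxcases with rfl | rfl | rfl | rfl | rfl | rfl
        · exact Or.inl h2
        · exact Or.inl ht
        · exact Or.inr (by rwa [inv_inv])
        · exact Or.inr (by rwa [inv_inv])
        · exact Or.inl h1
        · exact Or.inr (by rwa [inv_inv])
      have hblock : ([F2, tGen, F2⁻¹, tGen⁻¹] :
          List (UnrestrictedWreathZ (WreathV H))).prod = (embedV (vB h hh))⁻¹ := by
        rw [← comm_fTwo ℓ h hh, ← commutatorElement_inv, commutatorElement_def, ← hF2]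
        simp only [List.prod_cons, List.prod_nil]
        group
      have htail : ([tGen, F1, tGen⁻¹, F1⁻¹] :
          List (UnrestrictedWreathZ (WreathV H))).prod = embedV (vA ℓ h hh) := by
        rw [← comm_fOne ℓ h hh, commutatorElement_def, ← hF1]
        simp only [List.prod_cons, List.prod_nil]
        group
      have hprod₀ : l₀.prod = embedV (wreathRight h : WreathV H) := by
        rw [hl₀, List.prod_append, List.prod_flatten, List.map_replicate, hblock,
          List.prod_replicate, htail, ← embed_wreathRight_eq ℓ h hh]
      rw [wordLength]
      refine le_csInf ⟨l₀.length, l₀, rfl, hmem₀, hprod₀⟩ ?_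
      rintro n ⟨l, hlen, hmem, hprod⟩
      have hword := PhiHat_word ℓ h hℓ l hmem 1
      rw [one_mul, hprod, PhiHat_embed ℓ h hℓ, PhiHat_one] at hword
      have : (ℓ h : ℚ) ≤ (l.length : ℚ) := by linarith
      rw [← hlen]
      exact_mod_cast this
end

section
/- Let T be a set, H a group, and (f_i)_{i∈I} an arbitrary family of functions T → H, each having finite range, regarded as elements of the Cartesian power H^T with pointwise multiplication. Then the subgroup ⟨ f_i : i ∈ I ⟩ of H^T belongs to the class E(H); that is, every finitely generated subgroup of ⟨ f_i : i ∈ I ⟩ embeds into a direct power H^r for some r ∈ ℕ. -/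
/-- `K` belongs to the class `E(H)`: every finitely generated subgroup of `K` embeds into a
finite direct power of `H`. -/
def InClassE (H : Type*) [Group H] (K : Type*) [Group K] : Prop :=
  ∀ S : Subgroup K, S.FG → ∃ (n : ℕ) (φ : ↥S →* (Fin n → H)), Function.Injective φ

/-- Every element of the closure of a family of finite-range functions has finite range. -/
lemma finiteRange_of_mem_closure {T H : Type} [Group H] {I : Type} (f : I → (T → H))
    (hfin : ∀ i, (Set.range (f i)).Finite) :
    ∀ g ∈ Subgroup.closure (Set.range f), (Set.range g).Finite := by
  intro g hg
  induction hg using Subgroup.closure_induction with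
  | mem x hx => obtain ⟨i, rfl⟩ := hx; exact hfin i
  | one =>
      exact (Set.finite_singleton (1 : H)).subset (by rintro _ ⟨t, rfl⟩; simp)
  | mul x y _ _ hx hy =>
      refine (hx.image2 (· * ·) hy).subset ?_
      rintro _ ⟨t, rfl⟩
      exact Set.mem_image2_of_mem ⟨t, rfl⟩ ⟨t, rfl⟩
  | inv x _ hx =>
      refine (hx.image (·⁻¹)).subset ?_
      rintro _ ⟨t, rfl⟩
      exact ⟨x t, ⟨t, rfl⟩, rfl⟩

/-- If `(f_i)_{i ∈ I}` is a family of functions `T → H` with finite range, regarded as elements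
of the Cartesian power `H^T`, then the subgroup they generate belongs to `E(H)`. -/
theorem subgroup_generated_by_finite_range_functions_in_E
    {T : Type} {H : Type} [Group H] {I : Type} (f : I → (T → H))
    (hfin : ∀ i, (Set.range (f i)).Finite) :
    InClassE H ↥(Subgroup.closure (Set.range f) : Subgroup (T → H)) := by
  intro S hS
  obtain ⟨F, hF⟩ := hS
  -- the "evaluation pattern" map on generators
  let e : T → (↥F → H) := fun t g => (g : ↥(Subgroup.closure (Set.range f))).val t
  have hfe : (Set.range e).Finite := by
    have hsub : Set.range e ⊆ Set.pi Set.univ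
        (fun g : ↥F => Set.range ((g : ↥(Subgroup.closure (Set.range f))).val)) := by
      rintro _ ⟨t, rfl⟩ g _
      exact ⟨t, rfl⟩
    exact (Set.Finite.pi (fun g : ↥F =>
      finiteRange_of_mem_closure f hfin _ (g : ↥(Subgroup.closure (Set.range f))).2)).subset hsub
  haveI : Fintype ↥(Set.range e) := hfe.fintype
  -- select a representative point for each pattern
  let sel : ↥(Set.range e) → T := fun v => v.2.choose
  have hsel : ∀ v : ↥(Set.range e), e (sel v) = v := fun v => v.2.choose_spec
  -- every element of S takes equal values at points with the same pattern
  have key : ∀ s : ↥(Subgroup.closure (Set.range f)), s ∈ S →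
      ∀ t t', e t = e t' → s.val t = s.val t' := by
    intro s hs
    rw [← hF] at hs
    induction hs using Subgroup.closure_induction with
    | mem x hx =>
        intro t t' h
        exact congrFun h ⟨x, hx⟩
    | one => intro t t' _; rfl
    | mul x y _ _ hx hy =>
        intro t t' h
        show (x.val * y.val) t = (x.val * y.val) t'
        simp only [Pi.mul_apply, hx t t' h, hy t t' h]
    | inv x _ hx =>
        intro t t' h
        show (x.val)⁻¹ t = (x.val)⁻¹ t'
        simp only [Pi.inv_apply, hx t t' h]
  -- the embedding into a finite power indexed by patterns
  let ψ : ↥S →* (↥(Set.range e) → H) :=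
    { toFun := fun s v => ((s : ↥(Subgroup.closure (Set.range f))) : T → H) (sel v)
      map_one' := rfl
      map_mul' := fun a b => rfl }
  have hinj : Function.Injective ψ := by
    rw [injective_iff_map_eq_one]
    intro a ha
    ext t
    have hv : e (sel ⟨e t, t, rfl⟩) = e t := hsel ⟨e t, t, rfl⟩
    have h1 := key _ a.2 t (sel ⟨e t, t, rfl⟩) hv.symm
    have h2 : ψ a ⟨e t, t, rfl⟩ = 1 := by rw [ha]; rfl
    simpa [h1, ψ] using h2
  -- reindex by `Fin n`
  let eqv := Fintype.equivFin ↥(Set.range e)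
  let ρ : (↥(Set.range e) → H) →* (Fin (Fintype.card ↥(Set.range e)) → H) :=
    { toFun := fun g i => g (eqv.symm i)
      map_one' := rfl
      map_mul' := fun a b => rfl }
  have hρ : Function.Injective ρ := by
    intro a b hab
    funext v
    have := congrFun hab (eqv v)
    simpa [ρ, eqv] using this
  exact ⟨_, ρ.comp ψ, hρ.comp hinj⟩
end

section
/- Let G be a group generated by a finite set X and let (G_k)_{k≥1} be a sequence of quotient groups of G, each equipped with the word metric d_k with respect to the image of X. Let H be the restricted direct product ⨁_{k≥1} G_k (the subgroup of ∏_{k≥1} G_k of elements with all but finitely many coordinates trivial), and for h = (g_k) ∈ H define ℓ(h) = Σ_{k=1}^∞ k·d_k(1, g_k). Then ℓ is a length function on H and the growth of H with respect to ℓ is at most exponential. -/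
/-- The growth of `H` with respect to `ℓ` is at most exponential: there is a constant `a`
such that the ball of radius `n` is finite of cardinality at most `a ^ n`. -/
def AtMostExponentialGrowth {H : Type*} [Group H] (ℓ : H → ℕ) : Prop :=
  ∃ a : ℕ, ∀ n : ℕ, {h : H | ℓ h ≤ n}.Finite ∧ Nat.card {h : H | ℓ h ≤ n} ≤ a ^ n

/-- The restricted direct product `⨁_k Q_k`: the subgroup of `∏_k Q_k` of elements with all but
finitely many coordinates trivial. -/
def restrictedProd (Q : ℕ → Type*) [∀ k, Group (Q k)] : Subgroup (∀ k, Q k) where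
  carrier := {h | {k | h k ≠ 1}.Finite}
  one_mem' := by simp
  mul_mem' := by
    intro a b ha hb
    refine (ha.union hb).subset fun k hk => ?_
    by_contra hc
    simp only [Set.mem_union, Set.mem_setOf_eq, not_or, not_not] at hc
    exact hk (by simp [hc.1, hc.2])
  inv_mem' := by
    intro a ha
    refine ha.subset fun k hk => ?_
    simpa using hk

/-- The length function `ℓ(h) = Σ_k (k+1) · d_k(1, h_k)` on the restricted product, where `d_k`
is the word metric of `Q_k` with respect to the generating set `X k`. -/
noncomputable def restrictedLength (Q : ℕ → Type*) [∀ k, Group (Q k)]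
    (X : ∀ k, Set (Q k)) (h : ↥(restrictedProd Q)) : ℕ :=
  ∑ᶠ k, (k + 1) * wordLength (X k) ((h : ∀ k, Q k) k)

/-! ### Auxiliary lemmas -/

section WL
variable {G : Type*} [Group G] (X : Set G)

theorem wordLength_le' {g : G} {l : List G} (hl : ∀ x ∈ l, x ∈ X ∨ x⁻¹ ∈ X)
    (hp : l.prod = g) : wordLength X g ≤ l.length :=
  Nat.sInf_le ⟨l, rfl, hl, hp⟩

theorem wordLength_one' : wordLength X (1 : G) = 0 :=
  Nat.le_zero.mp (by simpa using wordLength_le' X (g := 1) (l := []) (by simp) (by simp))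

theorem wordLength_spec' {g : G} (hg : g ∈ Subgroup.closure X) :
    ∃ l : List G, l.length = wordLength X g ∧ (∀ x ∈ l, x ∈ X ∨ x⁻¹ ∈ X) ∧ l.prod = g := by
  have hg' : g ∈ Submonoid.closure (X ∪ X⁻¹) := by
    rw [← Subgroup.closure_toSubmonoid]; exact hg
  obtain ⟨l, hl, hp⟩ := Submonoid.exists_list_of_mem_closure hg'
  have hne : {n | ∃ l : List G, l.length = n ∧ (∀ x ∈ l, x ∈ X ∨ x⁻¹ ∈ X) ∧ l.prod = g}.Nonempty := by
    refine ⟨l.length, l, rfl, fun x hx => ?_, hp⟩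
    rcases hl x hx with h | h
    · exact Or.inl h
    · exact Or.inr (by simpa using h)
  exact Nat.sInf_mem hne

theorem wordLength_eq_zero' {g : G} (hg : g ∈ Subgroup.closure X)
    (h : wordLength X g = 0) : g = 1 := by
  obtain ⟨l, hlen, -, hp⟩ := wordLength_spec' X hg
  rw [h, List.length_eq_zero_iff] at hlen
  rw [hlen] at hp
  simpa using hp.symm

theorem wordLength_inv_le' {g : G} (hg : g ∈ Subgroup.closure X) :
    wordLength X g⁻¹ ≤ wordLength X g := by
  obtain ⟨l, hlen, hl, hp⟩ := wordLength_spec' X hg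
  calc wordLength X g⁻¹ ≤ ((l.map (·⁻¹)).reverse).length := by
        refine wordLength_le' X (fun x hx => ?_) ?_
        · simp only [List.mem_reverse, List.mem_map] at hx
          obtain ⟨y, hy, rfl⟩ := hx
          rcases hl y hy with h | h
          · exact Or.inr (by simpa using h)
          · exact Or.inl h
        · rw [← List.prod_inv_reverse, hp]
    _ = wordLength X g := by simpa using hlen

theorem wordLength_inv' {g : G} (hg : g ∈ Subgroup.closure X) :
    wordLength X g⁻¹ = wordLength X g := by
  refine le_antisymm (wordLength_inv_le' X hg) ?_
  simpa using wordLength_inv_le' X (g := g⁻¹) (inv_mem hg)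

theorem wordLength_mul_le' {g h : G} (hg : g ∈ Subgroup.closure X)
    (hh : h ∈ Subgroup.closure X) :
    wordLength X (g * h) ≤ wordLength X g + wordLength X h := by
  obtain ⟨l1, hlen1, hl1, hp1⟩ := wordLength_spec' X hg
  obtain ⟨l2, hlen2, hl2, hp2⟩ := wordLength_spec' X hh
  calc wordLength X (g * h) ≤ (l1 ++ l2).length := by
        refine wordLength_le' X (fun x hx => ?_) ?_
        · rcases List.mem_append.mp hx with h' | h'
          · exact hl1 x h'
          · exact hl2 x h'
        · rw [List.prod_append, hp1, hp2]
    _ = _ := by rw [List.length_append, hlen1, hlen2]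

end WL

theorem length_intercalate_le' {α : Type*} (a : α) (ls : List (List α)) :
    (List.intercalate [a] ls).length ≤ (ls.map List.length).sum + ls.length := by
  induction ls with
  | nil => simp [List.intercalate]
  | cons l ls ih =>
    cases ls with
    | nil => simp [List.intercalate]
    | cons l' ls' =>
      have : List.intercalate [a] (l :: l' :: ls') = l ++ [a] ++ List.intercalate [a] (l' :: ls') := by
        simp [List.intercalate, List.intersperse]
      rw [this]
      simp only [List.length_append, List.map_cons, List.sum_cons, List.length_cons,
        List.length_nil] at ih ⊢
      omega

/-- If `(Q_k)` is a sequence of quotients of a finitely generated group `G`, then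
`ℓ(h) = Σ_k (k+1)·d_k(1, h_k)` is a length function on `⨁_k Q_k` of at most exponential
growth. -/
theorem restricted_product_length_function {G : Type} [Group G] (X : Finset G)
    (hX : Subgroup.closure (X : Set G) = ⊤)
    (Q : ℕ → Type) [instQ : ∀ k, Group (Q k)] (π : ∀ k, G →* Q k)
    (hπ : ∀ k, Function.Surjective (π k)) :
    IsLengthFunction (H := ↥(restrictedProd Q))
      (restrictedLength Q (fun k => (π k) '' (X : Set G))) ∧
    AtMostExponentialGrowth (H := ↥(restrictedProd Q))
      (restrictedLength Q (fun k => (π k) '' (X : Set G))) := by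
  classical
  set S : ∀ k, Set (Q k) := fun k => (π k) '' (X : Set G) with hS
  have hSgen : ∀ k (g : Q k), g ∈ Subgroup.closure (S k) := by
    intro k g
    have : Subgroup.closure (S k) = ⊤ := by
      rw [hS]
      rw [← MonoidHom.map_closure, hX, Subgroup.map_top_of_surjective _ (hπ k)]
    rw [this]; trivial
  set H := ↥(restrictedProd Q) with hH
  set ℓ : H → ℕ := restrictedLength Q S with hℓ
  -- the support of the summand is finite
  have hsupp : ∀ h : H,
      (Function.support fun k => (k + 1) * wordLength (S k) ((h : ∀ k, Q k) k)).Finite := by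
    intro h
    refine h.2.subset fun k hk => ?_
    simp only [Function.mem_support, Set.mem_setOf_eq] at hk ⊢
    intro hc
    rw [hc, wordLength_one'] at hk
    simp at hk
  -- expression as a finite sum
  have hsum_eq : ∀ (h : H) (s : Finset ℕ), (∀ k, (h : ∀ k, Q k) k ≠ 1 → k ∈ s) →
      ℓ h = ∑ k ∈ s, (k + 1) * wordLength (S k) ((h : ∀ k, Q k) k) := by
    intro h s hs
    refine finsum_eq_sum_of_support_subset _ fun k hk => ?_
    simp only [Function.mem_support] at hk
    refine hs k fun hc => ?_
    rw [hc, wordLength_one'] at hk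
    simp at hk
  have hterm : ∀ (h : H) (k : ℕ),
      (k + 1) * wordLength (S k) ((h : ∀ k, Q k) k) ≤ ℓ h := fun h k =>
    single_le_finsum k (hsupp h) fun j => Nat.zero_le _
  have hzero : ∀ h : H, ℓ h = 0 ↔ h = 1 := by
    intro h
    constructor
    · intro h0
      refine Subtype.ext (funext fun k => ?_)
      have := hterm h k
      rw [h0, Nat.le_zero, Nat.mul_eq_zero] at this
      have hw : wordLength (S k) ((h : ∀ k, Q k) k) = 0 := by omega
      exact wordLength_eq_zero' (S k) (hSgen k _) hw
    · rintro rfl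
      have : (fun k => (k + 1) * wordLength (S k) (((1 : H) : ∀ k, Q k) k)) =
          fun _ => (0 : ℕ) := by
        funext k
        simp [wordLength_one']
      rw [hℓ, restrictedLength, this, finsum_zero]
  have hinv : ∀ h : H, ℓ h⁻¹ = ℓ h := by
    intro h
    refine finsum_congr fun k => ?_
    have : ((h⁻¹ : H) : ∀ k, Q k) k = (((h : ∀ k, Q k)) k)⁻¹ := rfl
    rw [this, wordLength_inv' (S k) (hSgen k _)]
  have hmul : ∀ g h : H, ℓ (g * h) ≤ ℓ g + ℓ h := by
    intro g h
    set s : Finset ℕ := (g.2.union h.2).toFinset with hs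
    have hg_mem : ∀ k, (g : ∀ k, Q k) k ≠ 1 → k ∈ s := by
      intro k hk; simp [hs, Set.Finite.mem_toFinset]; exact Or.inl hk
    have hh_mem : ∀ k, (h : ∀ k, Q k) k ≠ 1 → k ∈ s := by
      intro k hk; simp [hs, Set.Finite.mem_toFinset]; exact Or.inr hk
    have hgh_mem : ∀ k, ((g * h : H) : ∀ k, Q k) k ≠ 1 → k ∈ s := by
      intro k hk
      by_contra hc
      have h1 : (g : ∀ k, Q k) k = 1 := by_contra fun hx => hc (hg_mem k hx)
      have h2 : (h : ∀ k, Q k) k = 1 := by_contra fun hx => hc (hh_mem k hx)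
      exact hk (by show (g : ∀ k, Q k) k * (h : ∀ k, Q k) k = 1; rw [h1, h2, one_mul])
    rw [hsum_eq (g * h) s hgh_mem, hsum_eq g s hg_mem, hsum_eq h s hh_mem,
      ← Finset.sum_add_distrib]
    refine Finset.sum_le_sum fun k _ => ?_
    have : ((g * h : H) : ∀ k, Q k) k = (g : ∀ k, Q k) k * (h : ∀ k, Q k) k := rfl
    rw [this, ← Nat.mul_add]
    exact Nat.mul_le_mul_left _ (wordLength_mul_le' (S k) (hSgen k _) (hSgen k _))
  refine ⟨⟨hzero, hinv, hmul⟩, ?_⟩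
  -- Growth
  set B := {x // x ∈ X} × Bool with hB
  set eval : ∀ k, B → Q k := fun k p => if p.2 then π k p.1 else (π k (p.1 : G))⁻¹ with heval
  have liftWord : ∀ (k) (g : Q k), ∃ w : List B,
      w.length = wordLength (S k) g ∧ (w.map (eval k)).prod = g := by
    intro k g
    obtain ⟨l, hlen, hl, hp⟩ := wordLength_spec' (S k) (hSgen k g)
    suffices hgen : ∀ l : List (Q k), (∀ x ∈ l, x ∈ S k ∨ x⁻¹ ∈ S k) →
        ∃ w : List B, w.length = l.length ∧ (w.map (eval k)).prod = l.prod by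
      obtain ⟨w, hw1, hw2⟩ := hgen l hl
      exact ⟨w, by rw [hw1, hlen], by rw [hw2, hp]⟩
    intro l hl
    induction l with
    | nil => exact ⟨[], by simp, by simp⟩
    | cons y t ih =>
      obtain ⟨w, hw1, hw2⟩ := ih fun x hx => hl x (List.mem_cons_of_mem _ hx)
      rcases hl y (List.mem_cons_self) with hy | hy
      · obtain ⟨x, hx, hxy⟩ := hy
        refine ⟨(⟨x, hx⟩, true) :: w, by simp [hw1], ?_⟩
        simp only [List.map_cons, List.prod_cons, hw2]
        simp [heval, hxy]
      · obtain ⟨x, hx, hxy⟩ := hy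
        refine ⟨(⟨x, hx⟩, false) :: w, by simp [hw1], ?_⟩
        simp only [List.map_cons, List.prod_cons, hw2]
        have : (π k x)⁻¹ = y := by rw [hxy]; simp
        simp [heval, this]
  choose word hwlen hwprod using liftWord
  refine ⟨(2 * X.card + 2) ^ 2, fun n => ?_⟩
  rcases Nat.eq_zero_or_pos n with rfl | hn
  · have hball : {h : H | ℓ h ≤ 0} = {1} := by
      ext h
      simp only [Set.mem_setOf_eq, Nat.le_zero, Set.mem_singleton_iff]
      exact hzero h
    rw [hball]
    refine ⟨Set.finite_singleton _, ?_⟩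
    simp
  · -- n ≥ 1
    set s : Set H := {h : H | ℓ h ≤ n} with hsdef
    have htriv : ∀ h ∈ s, ∀ k, n ≤ k → (h : ∀ k, Q k) k = 1 := by
      intro h hh k hk
      have h1 := (hterm h k).trans hh
      have hw : wordLength (S k) ((h : ∀ k, Q k) k) = 0 := by nlinarith [h1]
      exact wordLength_eq_zero' (S k) (hSgen k _) hw
    have hsum_le : ∀ h ∈ s, ∑ i ∈ Finset.range n, wordLength (S i) ((h : ∀ k, Q k) i) ≤ n := by
      intro h hh
      set F : Finset ℕ := h.2.toFinset ∪ Finset.range n with hF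
      have h1 : ℓ h = ∑ k ∈ F, (k + 1) * wordLength (S k) ((h : ∀ k, Q k) k) :=
        hsum_eq h F fun k hk => Finset.mem_union_left _ (h.2.mem_toFinset.mpr hk)
      calc ∑ i ∈ Finset.range n, wordLength (S i) ((h : ∀ k, Q k) i)
          ≤ ∑ i ∈ Finset.range n, (i + 1) * wordLength (S i) ((h : ∀ k, Q k) i) :=
            Finset.sum_le_sum fun i _ => Nat.le_mul_of_pos_left _ (Nat.succ_pos i)
        _ ≤ ∑ k ∈ F, (k + 1) * wordLength (S k) ((h : ∀ k, Q k) k) :=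
            Finset.sum_le_sum_of_subset (Finset.subset_union_right)
        _ = ℓ h := h1.symm
        _ ≤ n := hh
    set enc : H → List (Option B) := fun h =>
      List.intercalate [(none : Option B)]
        (List.ofFn fun i : Fin n => (word i ((h : ∀ k, Q k) i)).map some) with henc
    have hlen_enc : ∀ h ∈ s, (enc h).length ≤ 2 * n := by
      intro h hh
      have h0 := length_intercalate_le' (none : Option B)
        (List.ofFn fun i : Fin n => (word i ((h : ∀ k, Q k) i)).map some)
      rw [List.length_ofFn] at h0
      have h1 : ((List.ofFn fun i : Fin n =>
          (word i ((h : ∀ k, Q k) i)).map some).map List.length).sum ≤ n := by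
        rw [List.map_ofFn, List.sum_ofFn]
        calc ∑ i : Fin n, (List.length ∘ fun i : Fin n =>
              (word i ((h : ∀ k, Q k) i)).map some) i
            = ∑ i ∈ Finset.range n, wordLength (S i) ((h : ∀ k, Q k) i) := by
              rw [← Fin.sum_univ_eq_sum_range]
              refine Finset.sum_congr rfl fun i _ => ?_
              simp [hwlen]
          _ ≤ n := hsum_le h hh
      have h2 : (enc h).length = ([(none : Option B)].intercalate
          (List.ofFn fun i : Fin n => (word i ((h : ∀ k, Q k) i)).map some)).length := rfl
      omega
    have henc_inj : ∀ h ∈ s, ∀ h' ∈ s, enc h = enc h' → h = h' := by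
      intro h hh h' hh' he
      have hsplit : ∀ (g : H), @List.splitOn (Option B) Option.instBEq none (enc g) =
          List.ofFn fun i : Fin n => (word i ((g : ∀ k, Q k) i)).map some := by
        intro g
        exact List.splitOn_intercalate
          (ls := List.ofFn fun i : Fin n => (word i ((g : ∀ k, Q k) i)).map some)
          (none : Option B)
          (fun l hl => by
            simp only [List.mem_ofFn] at hl
            obtain ⟨i, rfl⟩ := hl
            simp)
          (by
            intro hc
            have := congrArg List.length hc
            simp at this
            omega)
      have h2 : (List.ofFn fun i : Fin n => (word i ((h : ∀ k, Q k) i)).map some) =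
          List.ofFn fun i : Fin n => (word i ((h' : ∀ k, Q k) i)).map some := by
        rw [← hsplit h, ← hsplit h', he]
      have h3 := List.ofFn_injective h2
      refine Subtype.ext (funext fun k => ?_)
      rcases lt_or_ge k n with hk | hk
      · have h4 := congrFun h3 ⟨k, hk⟩
        have h5 : word k ((h : ∀ k, Q k) k) = word k ((h' : ∀ k, Q k) k) :=
          List.map_injective_iff.mpr (Option.some_injective B) h4
        rw [← hwprod k ((h : ∀ k, Q k) k), ← hwprod k ((h' : ∀ k, Q k) k), h5]
      · rw [htriv h hh k hk, htriv h' hh' k hk]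
    set F : ↥s → (Fin (2 * n) → Option (Option B)) :=
      fun h i => (enc h.1)[(i : ℕ)]? with hFdef
    have hFinj : Function.Injective F := by
      intro h h' hFe
      have he : enc h.1 = enc h'.1 := by
        refine List.ext_getElem? fun i => ?_
        rcases lt_or_ge i (2 * n) with hi | hi
        · exact congrFun hFe ⟨i, hi⟩
        · rw [List.getElem?_eq_none ((hlen_enc h.1 h.2).trans hi),
            List.getElem?_eq_none ((hlen_enc h'.1 h'.2).trans hi)]
      exact Subtype.ext (henc_inj h.1 h.2 h'.1 h'.2 he)
    have hfin : Finite ↥s := Finite.of_injective F hFinj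
    refine ⟨Set.finite_coe_iff.mp hfin, ?_⟩
    calc Nat.card ↥s ≤ Nat.card (Fin (2 * n) → Option (Option B)) :=
          Nat.card_le_card_of_injective F hFinj
      _ = (X.card * 2 + 2) ^ (2 * n) := by
          rw [Nat.card_eq_fintype_card]
          rw [Fintype.card_fun]
          simp [hB]
      _ = ((2 * X.card + 2) ^ 2) ^ n := by
          rw [← pow_mul]
          ring_nf
end

section
/- Let G be an elementary amenable group. Then: (1) the elementary class c(G) is either 0 or a successor ordinal; (2) if G is countable, then c(G) < ω₁, where ω₁ is the first uncountable ordinal; (3) if G is finitely generated, then c(G) is either 0 or the successor of an ordinal which is itself 0 or a successor (in particular, c(G) is never the successor of a limit ordinal). -/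
universe u

/-- Groups obtained from a class `C` by applying one extension or one directed union. -/
def ObtainedByExtOrUnion (C : ∀ G : Type u, Group G → Prop)
    (G : Type u) (instG : Group G) : Prop :=
  letI := instG
  (∃ N : Subgroup G, ∃ _ : N.Normal, C ↥N inferInstance ∧ C (G ⧸ N) inferInstance) ∨
  (∃ (ι : Type u) (K : ι → Subgroup G), Nonempty ι ∧ Directed (· ≤ ·) K ∧
      (∀ g : G, ∃ i, g ∈ K i) ∧ ∀ i, C ↥(K i) inferInstance)

/-- The transfinite hierarchy `EG_α`: `EG_0` consists of finite and abelian groups, at successor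
stages one applies one extension or one directed union, and at limit stages one takes the union
of the previous stages. -/
noncomputable def EG : Ordinal.{u} → ∀ G : Type u, Group G → Prop := fun α =>
  Ordinal.limitRecOn (motive := fun _ => ∀ G : Type u, Group G → Prop) α
    (fun G _ => Finite G ∨ ∀ a b : G, a * b = b * a)
    (fun _ ih => ObtainedByExtOrUnion ih)
    (fun o _ ih G instG => ∃ β, ∃ hβ : β < o, ih β hβ G instG)

/-- A group is elementary amenable if it lies in some `EG_α`. -/
def IsElementaryAmenable (G : Type u) [instG : Group G] : Prop := ∃ α, EG α G instG

/-- The elementary class `c(G)`: the least ordinal `α` with `G ∈ EG_α`. -/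
noncomputable def elemClass (G : Type u) [instG : Group G] : Ordinal.{u} :=
  sInf {α | EG α G instG}

lemma EG_zero (G : Type u) (i : Group G) :
    EG 0 G i ↔ (Finite G ∨ ∀ a b : G, a * b = b * a) := by
  unfold EG
  rw [Ordinal.limitRecOn_zero]

lemma EG_succ (α : Ordinal.{u}) :
    EG (α + 1) = ObtainedByExtOrUnion (EG α) := by
  unfold EG
  rw [Ordinal.add_one_eq_succ, Ordinal.limitRecOn_succ]

lemma EG_limit {α : Ordinal.{u}} (h : Order.IsSuccLimit α) (G : Type u) (i : Group G) :
    EG α G i ↔ ∃ β, β < α ∧ EG β G i := by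
  unfold EG
  rw [Ordinal.limitRecOn_limit _ _ _ _ h]
  exact ⟨fun ⟨β, hβ, h⟩ => ⟨β, hβ, h⟩, fun ⟨β, hβ, h⟩ => ⟨β, hβ, h⟩⟩

/-- `EG α` is invariant under group isomorphism. -/
lemma EG_congr : ∀ (α : Ordinal.{u}) {G H : Type u} (iG : Group G) (iH : Group H),
    (G ≃* H) → EG α G iG → EG α H iH := by
  intro α
  induction α using Ordinal.induction with
  | _ α IH =>
  intro G H iG iH e hG
  rcases Ordinal.zero_or_succ_or_isSuccLimit α with rfl | ⟨β, rfl⟩ | hlim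
  · rw [EG_zero] at hG ⊢
    rcases hG with h | h
    · exact Or.inl (Finite.of_equiv G e.toEquiv)
    · refine Or.inr fun a b => ?_
      have h2 := congrArg e (h (e.symm a) (e.symm b))
      simpa using h2
  · have hβ : β < Order.succ β := Order.lt_succ β
    rw [← Ordinal.add_one_eq_succ, EG_succ] at hG ⊢
    unfold ObtainedByExtOrUnion at hG ⊢
    rcases hG with ⟨N, hN, h1, h2⟩ | ⟨ι, K, hne, hdir, hcov, hK⟩
    · haveI := hN
      haveI hN' : (N.map e.toMonoidHom).Normal := hN.map e.toMonoidHom e.surjective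
      refine Or.inl ⟨N.map e.toMonoidHom, hN', ?_, ?_⟩
      · exact IH β hβ _ _ (Subgroup.equivMapOfInjective N e.toMonoidHom e.injective) h1
      · exact IH β hβ _ _ (QuotientGroup.congr N (N.map e.toMonoidHom) e rfl) h2
    · refine Or.inr ⟨ι, fun i => (K i).map e.toMonoidHom, hne, ?_, ?_, ?_⟩
      · intro i j
        obtain ⟨k, h1, h2⟩ := hdir i j
        exact ⟨k, Subgroup.map_mono h1, Subgroup.map_mono h2⟩
      · intro h
        obtain ⟨i, hi⟩ := hcov (e.symm h)
        exact ⟨i, ⟨e.symm h, hi, by simp⟩⟩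
      · intro i
        exact IH β hβ _ _ (Subgroup.equivMapOfInjective (K i) e.toMonoidHom e.injective) (hK i)
  · rw [EG_limit hlim] at hG ⊢
    obtain ⟨β, hβ, h⟩ := hG
    exact ⟨β, hβ, IH β hβ _ _ e h⟩

lemma EG_succ_of {α : Ordinal.{u}} {G : Type u} {i : Group G} (h : EG α G i) :
    EG (α + 1) G i := by
  rw [EG_succ]
  letI := i
  unfold ObtainedByExtOrUnion
  refine Or.inr ⟨ULift Unit, fun _ => ⊤, ⟨⟨()⟩⟩, fun a b => ⟨a, le_rfl, le_rfl⟩,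
    fun g => ⟨⟨()⟩, trivial⟩, fun _ => ?_⟩
  exact EG_congr α i _ Subgroup.topEquiv.symm h

lemma EG_mono : ∀ (β α : Ordinal.{u}), α ≤ β → ∀ {G : Type u} {i : Group G},
    EG α G i → EG β G i := by
  intro β
  induction β using Ordinal.induction with
  | _ β IH =>
  intro α hab G i h
  rcases eq_or_lt_of_le hab with rfl | hlt
  · exact h
  rcases Ordinal.zero_or_succ_or_isSuccLimit β with rfl | ⟨γ, rfl⟩ | hlim
  · exact absurd hlt (not_lt_zero (a := α))
  · have hγ : EG γ G i := IH γ (Order.lt_succ γ) α (Order.lt_succ_iff.mp hlt) h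
    rw [← Ordinal.add_one_eq_succ]
    exact EG_succ_of hγ
  · rw [EG_limit hlim]
    exact ⟨α, hlt, h⟩

lemma aleph_one_ord_isLimit : Order.IsSuccLimit ((Cardinal.aleph 1).ord) :=
  Cardinal.isSuccLimit_ord (Cardinal.aleph0_le_aleph 1)

/-- Every countable group in the hierarchy appears at a countable stage. -/
lemma EG_countable : ∀ (α : Ordinal.{u}) (G : Type u) (iG : Group G), Countable G →
    EG α G iG → ∃ β, β < (Cardinal.aleph 1).ord ∧ EG β G iG := by
  intro α
  induction α using Ordinal.induction with
  | _ α IH =>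
  intro G iG hc hG
  haveI := hc
  letI := iG
  rcases Ordinal.zero_or_succ_or_isSuccLimit α with rfl | ⟨γ, rfl⟩ | hlim
  · exact ⟨0, aleph_one_ord_isLimit.pos, hG⟩
  · have hγα : γ < Order.succ γ := Order.lt_succ γ
    rw [← Ordinal.add_one_eq_succ, EG_succ] at hG
    unfold ObtainedByExtOrUnion at hG
    rcases hG with ⟨N, hN, h1, h2⟩ | ⟨ι, K, hne, hdir, hcov, hK⟩
    · haveI := hN
      haveI : Countable (G ⧸ N) := Quotient.countable
      obtain ⟨β1, hβ1, hN1⟩ := IH γ hγα ↥N inferInstance inferInstance h1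
      obtain ⟨β2, hβ2, hN2⟩ := IH γ hγα (G ⧸ N) inferInstance inferInstance h2
      refine ⟨max β1 β2 + 1, ?_, ?_⟩
      · rw [Ordinal.add_one_eq_succ]
        exact aleph_one_ord_isLimit.succ_lt (max_lt hβ1 hβ2)
      · rw [EG_succ]
        unfold ObtainedByExtOrUnion
        exact Or.inl ⟨N, hN, EG_mono _ _ (le_max_left _ _) hN1,
          EG_mono _ _ (le_max_right _ _) hN2⟩
    · obtain ⟨f, hf⟩ := exists_surjective_nat G
      choose idx hidx using hcov
      let j : ℕ → ι := fun n => Nat.rec (idx (f 0))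
        (fun n jn => (hdir jn (idx (f (n + 1)))).choose) n
      have hstep : ∀ n, K (j n) ≤ K (j (n + 1)) :=
        fun n => (hdir (j n) (idx (f (n + 1)))).choose_spec.1
      have hmem : ∀ n, f n ∈ K (j n) := by
        intro n
        cases n with
        | zero => exact hidx (f 0)
        | succ n => exact (hdir (j n) (idx (f (n + 1)))).choose_spec.2 (hidx (f (n + 1)))
      have hmono : Monotone (fun n : ℕ => K (j n)) := monotone_nat_of_le_succ hstep
      choose β hβ hEGβ using fun n => IH γ hγα ↥(K (j n)) inferInstance inferInstance (hK (j n))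
      have hsup : iSup β < (Cardinal.aleph 1).ord := by
        apply Cardinal.iSup_lt_ord_lift_of_isRegular Cardinal.isRegular_aleph_one ?_ hβ
        rw [Cardinal.mk_nat, Cardinal.lift_aleph0]
        exact Cardinal.aleph0_lt_aleph_one
      refine ⟨iSup β + 1, ?_, ?_⟩
      · rw [Ordinal.add_one_eq_succ]
        exact aleph_one_ord_isLimit.succ_lt hsup
      · rw [EG_succ]
        unfold ObtainedByExtOrUnion
        refine Or.inr ⟨ULift ℕ, fun n => K (j n.down), ⟨⟨0⟩⟩, ?_, ?_, ?_⟩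
        · intro a b
          rcases le_total a.down b.down with h | h
          exacts [⟨b, hmono h, le_rfl⟩, ⟨a, le_rfl, hmono h⟩]
        · intro g
          obtain ⟨n, rfl⟩ := hf g
          exact ⟨⟨n⟩, hmem n⟩
        · intro n
          exact EG_mono _ _ (Ordinal.le_iSup β n.down) (hEGβ n.down)
  · rw [EG_limit hlim] at hG
    obtain ⟨γ, hγ, h⟩ := hG
    exact IH γ hγ G iG hc h

/-- For an elementary amenable group `G`: `c(G)` is `0` or a successor; if `G` is countable then
`c(G) < ω₁`; and if `G` is finitely generated then `c(G)` is `0` or the successor of an ordinal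
which is itself `0` or a successor. -/
theorem elemClass_basic_properties (G : Type u) [Group G] (hea : IsElementaryAmenable G) :
    (elemClass G = 0 ∨ ∃ β : Ordinal.{u}, elemClass G = β + 1) ∧
    (Countable G → elemClass G < (Cardinal.aleph 1).ord) ∧
    (Group.FG G →
      elemClass G = 0 ∨ ∃ β : Ordinal.{u}, (β = 0 ∨ ∃ γ, β = γ + 1) ∧ elemClass G = β + 1) := by
  have hmem : EG (elemClass G) G ‹Group G› := csInf_mem hea
  have hmin : ∀ β, EG β G ‹Group G› → elemClass G ≤ β := fun β h => csInf_le' h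
  have part1 : elemClass G = 0 ∨ ∃ β : Ordinal.{u}, elemClass G = β + 1 := by
    rcases Ordinal.zero_or_succ_or_isSuccLimit (elemClass G) with h0 | ⟨β, hβ⟩ | hlim
    · exact Or.inl h0
    · exact Or.inr ⟨β, by rw [← hβ, Ordinal.add_one_eq_succ]⟩
    · exfalso
      rw [EG_limit hlim] at hmem
      obtain ⟨β, hβ, h⟩ := hmem
      exact absurd (hmin β h) (not_le.mpr hβ)
  refine ⟨part1, ?_, ?_⟩
  · intro hc
    obtain ⟨α, hα⟩ := hea
    obtain ⟨β, hβ, h⟩ := EG_countable α G _ hc hα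
    exact lt_of_le_of_lt (hmin β h) hβ
  · intro hfg
    rcases part1 with h0 | ⟨β, heq⟩
    · exact Or.inl h0
    right
    refine ⟨β, ?_, heq⟩
    rcases Ordinal.zero_or_succ_or_isSuccLimit β with h0 | ⟨γ, hγ⟩ | hlim
    · exact Or.inl h0
    · exact Or.inr ⟨γ, by rw [← hγ, Ordinal.add_one_eq_succ]⟩
    exfalso
    have hmem' : EG (β + 1) G ‹Group G› := heq ▸ hmem
    rw [EG_succ] at hmem'
    unfold ObtainedByExtOrUnion at hmem'
    rcases hmem' with ⟨N, hN, h1, h2⟩ | ⟨ι, K, hne, hdir, hcov, hK⟩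
    · rw [EG_limit hlim] at h1 h2
      obtain ⟨γ1, hγ1, hh1⟩ := h1
      obtain ⟨γ2, hγ2, hh2⟩ := h2
      have hG' : EG (max γ1 γ2 + 1) G ‹Group G› := by
        rw [EG_succ]
        unfold ObtainedByExtOrUnion
        exact Or.inl ⟨N, hN, EG_mono _ _ (le_max_left _ _) hh1,
          EG_mono _ _ (le_max_right _ _) hh2⟩
      have hlt : max γ1 γ2 + 1 < β + 1 := by
        rw [Ordinal.add_one_eq_succ, Ordinal.add_one_eq_succ]
        exact Order.succ_lt_succ (max_lt hγ1 hγ2)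
      exact absurd (heq ▸ hmin _ hG') (not_le.mpr hlt)
    · haveI := hne
      haveI := Classical.decEq ι
      obtain ⟨S, hS⟩ := hfg.out
      choose idx hidx using hcov
      obtain ⟨j, hj⟩ := hdir.finset_le (S.image idx)
      have hsub : (S : Set G) ⊆ K j := by
        intro s hs
        exact hj (idx s) (Finset.mem_image_of_mem idx hs) (hidx s)
      have Ktop : K j = ⊤ := by
        rw [eq_top_iff, ← hS]
        exact (Subgroup.closure_le _).mpr hsub
      have hG' : EG β G ‹Group G› :=
        EG_congr β _ _ ((MulEquiv.subgroupCongr Ktop).trans Subgroup.topEquiv) (hK j)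
      have := heq ▸ hmin _ hG'
      exact absurd this (not_le.mpr (lt_of_lt_of_le (Order.lt_succ β)
        (by rw [Ordinal.add_one_eq_succ])))
end
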